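/- Let N ≥ 3 and let V : ℤ/Nℤ → ℝ. Let H be the real symmetric N × N matrix, indexed by ℤ/Nℤ, with entries H_{q,q} = V(q), H_{q,q+1} = H_{q,q−1} = −1 (indices modulo N), and all other entries zero, and let e₀ be the smallest eigenvalue of H. Then for every vector φ : ℤ/Nℤ → ℝ with φ(q) > 0 for all q, one has min_{q ∈ ℤ/Nℤ} [ −(φ(q+1) + φ(q−1))/φ(q) + V(q) ] ≤ e₀ ≤ max_{q ∈ ℤ/Nℤ} [ −(φ(q+1) + φ(q−1))/φ(q) + V(q) ]. -/

import Mathlib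

open scoped RealInnerProductSpace


section Aux
variable {N : ℕ} [NeZero N]

theorem zmod_mulVec_formula (hN : 3 ≤ N) (V : ZMod N → ℝ) (H : Matrix (ZMod N) (ZMod N) ℝ)
    (hH : ∀ q q' : ZMod N, H q q' =
      if q' = q then V q else if q' = q + 1 ∨ q' = q - 1 then -1 else 0)
    (x : ZMod N → ℝ) (q : ZMod N) :
    H.mulVec x q = V q * x q - x (q + 1) - x (q - 1) := by
  haveI : Fact (1 < N) := ⟨by omega⟩
  have h2 : (2 : ZMod N) ≠ 0 := by
    have hnd : ¬ (N ∣ 2) := fun h => absurd (Nat.le_of_dvd (by norm_num) h) (by omega)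
    have := (ZMod.natCast_eq_zero_iff 2 N).not.mpr hnd
    simpa using this
  have h1 : q + 1 ≠ q := by simp
  have h1' : q - 1 ≠ q := by simp
  have h3 : q + 1 ≠ q - 1 := by
    intro h; apply h2; linear_combination h
  rw [Matrix.mulVec, dotProduct]
  have : ∀ q' : ZMod N, H q q' * x q' =
      (if q' = q then V q * x q' else 0) + (if q' = q + 1 then -x q' else 0)
        + (if q' = q - 1 then -x q' else 0) := by
    intro q'
    rw [hH]
    by_cases hA : q' = q <;> by_cases hB : q' = q + 1 <;> by_cases hC : q' = q - 1 <;>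
      simp_all
  simp_rw [this, Finset.sum_add_distrib, Finset.sum_ite_eq' Finset.univ, Finset.mem_univ,
    if_true]
  ring

omit [NeZero N] in
theorem zmod_H_symm (V : ZMod N → ℝ) (H : Matrix (ZMod N) (ZMod N) ℝ)
    (hH : ∀ q q' : ZMod N, H q q' =
      if q' = q then V q else if q' = q + 1 ∨ q' = q - 1 then -1 else 0) :
    H.IsHermitian := by
  have key : ∀ i j : ZMod N, H j i = H i j := by
    intro i j
    rw [hH, hH]
    have hor : (i = j + 1 ∨ i = j - 1) ↔ (j = i + 1 ∨ j = i - 1) := by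
      constructor <;> rintro (h | h)
      · right; rw [h]; ring
      · left; rw [h]; ring
      · right; rw [h]; ring
      · left; rw [h]; ring
    by_cases hA : i = j
    · subst hA; rfl
    · rw [if_neg (show ¬ i = j from hA), if_neg (show ¬ j = i from fun h => hA h.symm),
        if_congr hor rfl rfl]
  ext i j
  simpa [Matrix.conjTranspose_apply] using key i j
end Aux

theorem periodic_discrete_schrodinger_bounds (N : ℕ) [NeZero N] (hN : 3 ≤ N)
    (V : ZMod N → ℝ) (H : Matrix (ZMod N) (ZMod N) ℝ)
    (hH : ∀ q q' : ZMod N, H q q' =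
      if q' = q then V q else if q' = q + 1 ∨ q' = q - 1 then -1 else 0)
    (e₀ : ℝ)
    (heig : ∃ v : ZMod N → ℝ, v ≠ 0 ∧ H.mulVec v = e₀ • v)
    (hmin : ∀ (μ : ℝ) (v : ZMod N → ℝ), v ≠ 0 → H.mulVec v = μ • v → e₀ ≤ μ)
    (φ : ZMod N → ℝ) (hφpos : ∀ q, 0 < φ q) :
    (⨅ q : ZMod N, (-(φ (q + 1) + φ (q - 1)) / φ q + V q)) ≤ e₀ ∧
    e₀ ≤ (⨆ q : ZMod N, (-(φ (q + 1) + φ (q - 1)) / φ q + V q)) := by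
  set f : ZMod N → ℝ := fun q => -(φ (q + 1) + φ (q - 1)) / φ q + V q with hf
  have hfq : ∀ q, f q * φ q = -(φ (q + 1) + φ (q - 1)) + V q * φ q := by
    intro q
    simp only [hf]
    rw [add_mul, div_mul_cancel₀ _ (hφpos q).ne']
  constructor
  · -- lower bound
    obtain ⟨v, hv0, hv⟩ := heig
    obtain ⟨q₀, -, hq₀⟩ := Finset.exists_max_image Finset.univ
      (fun q => |v q| / φ q) Finset.univ_nonempty
    set r : ZMod N → ℝ := fun q => |v q| / φ q with hr
    have hrpos : 0 < r q₀ := by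
      obtain ⟨q1, hq1⟩ := Function.ne_iff.mp hv0
      have : 0 < r q1 := div_pos (abs_pos.mpr hq1) (hφpos q1)
      exact lt_of_lt_of_le this (hq₀ q1 (Finset.mem_univ _))
    have hub : ∀ q, |v q| ≤ r q₀ * φ q := by
      intro q
      have := hq₀ q (Finset.mem_univ _)
      calc |v q| = r q * φ q := (div_mul_cancel₀ _ (hφpos q).ne').symm
        _ ≤ r q₀ * φ q := by nlinarith [hφpos q]
    have heq : V q₀ * v q₀ - v (q₀ + 1) - v (q₀ - 1) = e₀ * v q₀ := by
      have h1 := congrFun hv q₀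
      rw [zmod_mulVec_formula hN V H hH] at h1
      simpa using h1
    have heq2 : (V q₀ - e₀) * v q₀ = v (q₀ + 1) + v (q₀ - 1) := by linarith [heq]; 
    have habs : |V q₀ - e₀| * |v q₀| ≤ |v (q₀ + 1)| + |v (q₀ - 1)| := by
      rw [← abs_mul, heq2]
      exact abs_add_le _ _
    have hvq0 : |v q₀| = r q₀ * φ q₀ := (div_mul_cancel₀ _ (hφpos q₀).ne').symm
    have hkey : |V q₀ - e₀| * φ q₀ ≤ φ (q₀ + 1) + φ (q₀ - 1) := by
      have h1 : |V q₀ - e₀| * (r q₀ * φ q₀) ≤ r q₀ * (φ (q₀ + 1) + φ (q₀ - 1)) := by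
        rw [← hvq0]
        calc |V q₀ - e₀| * |v q₀| ≤ |v (q₀ + 1)| + |v (q₀ - 1)| := habs
          _ ≤ r q₀ * φ (q₀ + 1) + r q₀ * φ (q₀ - 1) := add_le_add (hub _) (hub _)
          _ = r q₀ * (φ (q₀ + 1) + φ (q₀ - 1)) := by ring
      nlinarith [abs_nonneg (V q₀ - e₀), hφpos q₀]
    have hfle : f q₀ ≤ e₀ := by
      have h2 : V q₀ - e₀ ≤ (φ (q₀ + 1) + φ (q₀ - 1)) / φ q₀ := by
        rw [le_div_iff₀ (hφpos q₀)]
        calc (V q₀ - e₀) * φ q₀ ≤ |V q₀ - e₀| * φ q₀ := by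
              nlinarith [le_abs_self (V q₀ - e₀), hφpos q₀]
          _ ≤ _ := hkey
      have h3 : f q₀ = -((φ (q₀ + 1) + φ (q₀ - 1)) / φ q₀) + V q₀ := by
        simp only [hf]
        rw [neg_div]
      rw [h3] at *
      linarith
    exact le_trans (ciInf_le (Set.Finite.bddBelow (Set.finite_range f)) q₀) hfle
  · -- upper bound
    haveI : Fact (1 < N) := ⟨by omega⟩
    set T := Matrix.toEuclideanLin H with hT
    have hsym : T.IsSymmetric := Matrix.isHermitian_iff_isSymmetric.mp (zmod_H_symm V H hH)
    have hev := hsym.hasEigenvalue_iInf_of_finiteDimensional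
    set μ : ℝ := ⨅ x : {x : EuclideanSpace ℝ (ZMod N) // x ≠ 0},
      RCLike.re ⟪T x, (x : EuclideanSpace ℝ (ZMod N))⟫ / ‖(x : EuclideanSpace ℝ (ZMod N))‖ ^ 2
      with hμ
    obtain ⟨w, hwmem, hw0⟩ := hev.exists_hasEigenvector
    have hweq : T w = μ • w := by
      have := Module.End.mem_eigenspace_iff.mp hwmem
      simpa using this
    -- transfer to mulVec
    set v' : ZMod N → ℝ := (WithLp.equiv 2 (ZMod N → ℝ)) w with hv'
    have hv'0 : v' ≠ 0 := fun h => hw0 (by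
      apply (WithLp.equiv 2 (ZMod N → ℝ)).injective
      simpa [hv'] using h)
    have hmv : H.mulVec v' = μ • v' := by
      have h1 := congrArg (WithLp.equiv 2 (ZMod N → ℝ)) hweq
      simpa [hT, hv', Matrix.ofLp_toEuclideanLin_apply] using h1
    have he₀μ : e₀ ≤ μ := hmin μ v' hv'0 hmv
    -- μ ≤ rayleigh quotient of φ
    set ψ : EuclideanSpace ℝ (ZMod N) := (WithLp.equiv 2 (ZMod N → ℝ)).symm φ with hψ
    have hψ0 : ψ ≠ 0 := by
      intro h
      have := congrFun (congrArg (WithLp.equiv 2 (ZMod N → ℝ)) h) 0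
      simp at this
      exact (hφpos 0).ne' this
    have hC : BddBelow (Set.range fun x : {x : EuclideanSpace ℝ (ZMod N) // x ≠ 0} =>
        RCLike.re ⟪T x, (x : EuclideanSpace ℝ (ZMod N))⟫ / ‖(x : EuclideanSpace ℝ (ZMod N))‖ ^ 2) := by
      refine ⟨-‖LinearMap.toContinuousLinearMap T‖, ?_⟩
      rintro y ⟨⟨x, hx⟩, rfl⟩
      set C := ‖LinearMap.toContinuousLinearMap T‖ with hCdef
      have hxn : 0 < ‖x‖ := norm_pos_iff.mpr hx
      have h1 : |⟪T x, x⟫| ≤ ‖T x‖ * ‖x‖ := abs_real_inner_le_norm _ _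
      have h2 : ‖T x‖ ≤ C * ‖x‖ := by
        have := (LinearMap.toContinuousLinearMap T).le_opNorm x
        simpa using this
      simp only [RCLike.re_to_real]
      rw [le_div_iff₀ (by positivity)]
      nlinarith [neg_abs_le (inner ℝ (T x) x : ℝ)]
    have hμle : μ ≤ RCLike.re ⟪T ψ, ψ⟫ / ‖ψ‖ ^ 2 := by
      rw [hμ]
      exact ciInf_le hC ⟨ψ, hψ0⟩
    -- compute the rayleigh quotient of ψ
    have hTψ : ∀ q : ZMod N, (T ψ : EuclideanSpace ℝ (ZMod N)) q = f q * φ q := by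
      intro q
      have : (T ψ : EuclideanSpace ℝ (ZMod N)) q = H.mulVec φ q := rfl
      rw [this, zmod_mulVec_formula hN V H hH, hfq]
      ring
    have hinner : ⟪T ψ, ψ⟫ = ∑ q : ZMod N, (f q * φ q) * φ q := by
      rw [PiLp.inner_apply]
      refine Finset.sum_congr rfl fun q _ => ?_
      have hψq : (ψ : EuclideanSpace ℝ (ZMod N)) q = φ q := rfl
      rw [RCLike.inner_apply, hTψ q, hψq]
      simp
      ring
    have hnorm : ‖ψ‖ ^ 2 = ∑ q : ZMod N, φ q * φ q := by
      rw [← real_inner_self_eq_norm_sq, PiLp.inner_apply]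
      refine Finset.sum_congr rfl fun q _ => ?_
      have hψq : (ψ : EuclideanSpace ℝ (ZMod N)) q = φ q := rfl
      rw [RCLike.inner_apply, hψq]
      simp
    set M : ℝ := ⨆ q : ZMod N, f q with hM
    have hfleM : ∀ q, f q ≤ M := fun q =>
      le_ciSup (Set.Finite.bddAbove (Set.finite_range f)) q
    have hBpos : 0 < ∑ q : ZMod N, φ q * φ q :=
      Finset.sum_pos (fun q _ => mul_pos (hφpos q) (hφpos q)) Finset.univ_nonempty
    have hAle : ∑ q : ZMod N, (f q * φ q) * φ q ≤ M * ∑ q : ZMod N, φ q * φ q := by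
      rw [Finset.mul_sum]
      refine Finset.sum_le_sum fun q _ => ?_
      have := mul_pos (hφpos q) (hφpos q)
      nlinarith [hfleM q]
    have hray : RCLike.re ⟪T ψ, ψ⟫ / ‖ψ‖ ^ 2 ≤ M := by
      rw [hinner, hnorm]
      simp only [RCLike.re_to_real]
      rw [div_le_iff₀ hBpos]
      exact hAle
    exact le_trans he₀μ (le_trans hμle hray)
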